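/- Let α ∈ (0,1) and set c_{2α} := ∫_ℝ |e^{iξ} − 1|² |ξ|^{−1−2α} dξ. Then for all real s, t, the integral ∫_ℝ (e^{isξ} − 1)·conj(e^{itξ} − 1)·|ξ|^{−1−2α} dξ is (absolutely convergent and) real, and equals c_{2α} · ½ (|s|^{2α} + |t|^{2α} − |t − s|^{2α}). -/

import Mathlib

open MeasureTheory

namespace FbmCov

open Set

noncomputable def e (x : ℝ) : ℂ := Complex.exp (Complex.I * (x : ℂ)) - 1

lemma norm_e_sq (x : ℝ) : ‖e x‖ ^ 2 = 2 - 2 * Real.cos x := by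
  have h : Complex.I * (x : ℂ) = (x : ℂ) * Complex.I := mul_comm _ _
  have h2 := Real.sin_sq_add_cos_sq x
  rw [e, h, Complex.sq_norm, Complex.normSq_apply, Complex.sub_re,
    Complex.sub_im, Complex.exp_ofReal_mul_I_re, Complex.exp_ofReal_mul_I_im, Complex.one_re,
    Complex.one_im]
  nlinarith

lemma norm_e_le_two (x : ℝ) : ‖e x‖ ≤ 2 := by
  have h : ‖Complex.exp (Complex.I * (x : ℂ))‖ = 1 := by
    rw [mul_comm, Complex.norm_exp_ofReal_mul_I]
  calc ‖e x‖ ≤ ‖Complex.exp (Complex.I * (x : ℂ))‖ + ‖(1 : ℂ)‖ := norm_sub_le _ _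
  _ ≤ 2 := by rw [h]; norm_num

lemma norm_e_le_abs (x : ℝ) : ‖e x‖ ≤ |x| := by
  have h : ‖e x‖ ^ 2 ≤ x ^ 2 := by
    rw [norm_e_sq]
    nlinarith [Real.one_sub_sq_div_two_le_cos (x := x)]
  nlinarith [norm_nonneg (e x), abs_nonneg x, sq_abs x]

lemma norm_e_sq_le_sq (x : ℝ) : ‖e x‖ ^ 2 ≤ x ^ 2 := by
  nlinarith [norm_e_le_abs x, norm_nonneg (e x), abs_nonneg x, sq_abs x]

lemma conj_e (x : ℝ) : (starRingEnd ℂ) (e x) = e (-x) := by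
  rw [e, e, map_sub, map_one, ← Complex.exp_conj]
  congr 2
  simp [Complex.conj_I]


lemma measurable_weight (α : ℝ) : Measurable (fun ξ : ℝ => |ξ| ^ (-1 - 2 * α)) :=
  measurable_abs.pow measurable_const

lemma integrable_base {α : ℝ} (hα : α ∈ Set.Ioo (0:ℝ) 1) :
    Integrable (fun ξ : ℝ => min (ξ ^ 2) 1 * |ξ| ^ (-1 - 2 * α)) := by
  obtain ⟨hα0, hα1⟩ := hα
  set g : ℝ → ℝ := fun ξ => min (ξ ^ 2) 1 * |ξ| ^ (-1 - 2 * α) with hg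
  have hmeas : Measurable g :=
    ((measurable_id.pow_const 2).min measurable_const).mul (measurable_weight α)
  have h1 : IntegrableOn g (Ioc 0 1) := by
    have hi : IntegrableOn (fun ξ : ℝ => ξ ^ (1 - 2 * α)) (Ioc 0 1) := by
      have := intervalIntegral.intervalIntegrable_rpow' (a := 0) (b := 1)
        (r := 1 - 2 * α) (by linarith)
      rw [intervalIntegrable_iff, uIoc_of_le (by norm_num)] at this
      exact this
    refine hi.integrable.mono' hmeas.aestronglyMeasurable ?_
    filter_upwards [ae_restrict_mem measurableSet_Ioc] with ξ hξ
    obtain ⟨hξ0, hξ1⟩ := hξ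
    have habs : |ξ| = ξ := abs_of_pos hξ0
    have : g ξ ≤ ξ ^ 2 * ξ ^ (-1 - 2 * α) := by
      show min (ξ ^ 2) 1 * |ξ| ^ (-1 - 2 * α) ≤ _
      rw [habs]
      exact mul_le_mul_of_nonneg_right (min_le_left _ _) (Real.rpow_nonneg hξ0.le _)
    have h2 : ξ ^ 2 * ξ ^ (-1 - 2 * α) = ξ ^ (1 - 2 * α) := by
      rw [← Real.rpow_natCast ξ 2, ← Real.rpow_add hξ0]
      norm_num
      congr 1
      ring
    rw [Real.norm_eq_abs, abs_of_nonneg]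
    · rw [← h2]; exact this
    · exact mul_nonneg (le_min (sq_nonneg ξ) one_pos.le) (Real.rpow_nonneg (abs_nonneg ξ) _)
  have h2 : IntegrableOn g (Ioi 1) := by
    have hi : IntegrableOn (fun ξ : ℝ => ξ ^ (-1 - 2 * α)) (Ioi 1) :=
      integrableOn_Ioi_rpow_of_lt (by linarith) one_pos
    refine hi.mono' hmeas.aestronglyMeasurable ?_
    filter_upwards [ae_restrict_mem measurableSet_Ioi] with ξ hξ
    have hξ0 : (0:ℝ) < ξ := lt_trans one_pos hξ
    have habs : |ξ| = ξ := abs_of_pos hξ0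
    rw [Real.norm_eq_abs, abs_of_nonneg
      (mul_nonneg (le_min (sq_nonneg ξ) one_pos.le) (Real.rpow_nonneg (abs_nonneg ξ) _)), habs]
    calc min (ξ ^ 2) 1 * ξ ^ (-1 - 2 * α) ≤ 1 * ξ ^ (-1 - 2 * α) :=
        mul_le_mul_of_nonneg_right (min_le_right _ _) (Real.rpow_nonneg hξ0.le _)
    _ = ξ ^ (-1 - 2 * α) := one_mul _
  have hIoi : IntegrableOn g (Ioi 0) := by
    have : Ioi (0:ℝ) = Ioc 0 1 ∪ Ioi 1 := by
      rw [Ioc_union_Ioi_eq_Ioi]; norm_num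
    rw [this, integrableOn_union]
    exact ⟨h1, h2⟩
  have hIci : IntegrableOn g (Ici 0) := by
    rwa [integrableOn_Ici_iff_integrableOn_Ioi]
  have hIio : IntegrableOn g (Iio 0) := by
    have heven : g ∘ (Neg.neg : ℝ → ℝ) = g := by
      funext x; simp [hg, abs_neg]
    have := (MeasurePreserving.integrableOn_comp_preimage
      (Measure.measurePreserving_neg (volume : Measure ℝ))
      (Homeomorph.neg ℝ).measurableEmbedding (f := g) (s := Ioi 0)).2 hIoi
    rw [heven] at this
    have hpre : (Neg.neg : ℝ → ℝ) ⁻¹' Ioi 0 = Iio 0 := by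
      ext x; simp
    rwa [hpre] at this
  rw [← integrableOn_univ, ← Iio_union_Ici (a := (0:ℝ)), integrableOn_union]
  exact ⟨hIio, hIci⟩


lemma integrable_F {α : ℝ} (hα : α ∈ Set.Ioo (0:ℝ) 1) (u : ℝ) :
    Integrable (fun ξ : ℝ => ‖e (u * ξ)‖ ^ 2 * |ξ| ^ (-1 - 2 * α)) := by
  have hmeas : Measurable (fun ξ : ℝ => ‖e (u * ξ)‖ ^ 2 * |ξ| ^ (-1 - 2 * α)) := by
    have hc : Continuous (fun ξ : ℝ => ‖e (u * ξ)‖ ^ 2) := by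
      apply Continuous.pow
      apply Continuous.norm
      exact (Complex.continuous_exp.comp (by continuity)).sub continuous_const
    exact hc.measurable.mul (measurable_weight α)
  refine ((integrable_base hα).const_mul (max (u ^ 2) 4)).mono'
    hmeas.aestronglyMeasurable ?_
  filter_upwards with ξ
  have hw : (0:ℝ) ≤ |ξ| ^ (-1 - 2 * α) := Real.rpow_nonneg (abs_nonneg ξ) _
  rw [Real.norm_eq_abs, abs_of_nonneg (mul_nonneg (sq_nonneg _) hw)]
  have hkey : ‖e (u * ξ)‖ ^ 2 ≤ max (u ^ 2) 4 * min (ξ ^ 2) 1 := by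
    rcases le_total (ξ ^ 2) 1 with h | h
    · rw [min_eq_left h]
      calc ‖e (u * ξ)‖ ^ 2 ≤ (u * ξ) ^ 2 := norm_e_sq_le_sq _
      _ = u ^ 2 * ξ ^ 2 := by ring
      _ ≤ max (u ^ 2) 4 * ξ ^ 2 := by gcongr; exact le_max_left _ _
    · rw [min_eq_right h]
      have := norm_e_le_two (u * ξ)
      calc ‖e (u * ξ)‖ ^ 2 ≤ 4 := by nlinarith [norm_nonneg (e (u * ξ))]
      _ ≤ max (u ^ 2) 4 * 1 := by rw [mul_one]; exact le_max_right _ _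
  calc ‖e (u * ξ)‖ ^ 2 * |ξ| ^ (-1 - 2 * α)
      ≤ (max (u ^ 2) 4 * min (ξ ^ 2) 1) * |ξ| ^ (-1 - 2 * α) :=
        mul_le_mul_of_nonneg_right hkey hw
  _ = max (u ^ 2) 4 * (min (ξ ^ 2) 1 * |ξ| ^ (-1 - 2 * α)) := by ring

lemma scaling {α : ℝ} (hα : α ∈ Set.Ioo (0:ℝ) 1) (u : ℝ) :
    ∫ ξ : ℝ, ‖e (u * ξ)‖ ^ 2 * |ξ| ^ (-1 - 2 * α)
      = |u| ^ (2 * α) * ∫ ξ : ℝ, ‖e ξ‖ ^ 2 * |ξ| ^ (-1 - 2 * α) := by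
  rcases eq_or_ne u 0 with hu | hu
  · subst hu
    have h0 : ∀ ξ : ℝ, ‖e ((0:ℝ) * ξ)‖ ^ 2 * |ξ| ^ (-1 - 2 * α) = 0 := by
      intro ξ; simp [e]
    rw [integral_congr_ae (Filter.Eventually.of_forall h0)]
    simp [Real.zero_rpow (by nlinarith [hα.1] : 2 * α ≠ 0)]
  · have hu' : (0:ℝ) < |u| := abs_pos.mpr hu
    set G : ℝ → ℝ := fun x => ‖e x‖ ^ 2 * |x| ^ (-1 - 2 * α) with hG
    have key : ∀ ξ : ℝ, ‖e (u * ξ)‖ ^ 2 * |ξ| ^ (-1 - 2 * α) = |u| ^ (1 + 2 * α) * G (u * ξ) := by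
      intro ξ
      have h1 : |u * ξ| ^ (-1 - 2 * α) = |u| ^ (-1 - 2 * α) * |ξ| ^ (-1 - 2 * α) := by
        rw [abs_mul, Real.mul_rpow (abs_nonneg u) (abs_nonneg ξ)]
      have h2 : |u| ^ (1 + 2 * α) * |u| ^ (-1 - 2 * α) = 1 := by
        rw [← Real.rpow_add hu']
        norm_num
      simp only [hG, h1]
      calc ‖e (u * ξ)‖ ^ 2 * |ξ| ^ (-1 - 2 * α)
          = (|u| ^ (1 + 2 * α) * |u| ^ (-1 - 2 * α)) * (‖e (u * ξ)‖ ^ 2 * |ξ| ^ (-1 - 2 * α)) := by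
            rw [h2, one_mul]
      _ = |u| ^ (1 + 2 * α) * (‖e (u * ξ)‖ ^ 2 * (|u| ^ (-1 - 2 * α) * |ξ| ^ (-1 - 2 * α))) := by
            ring
    rw [integral_congr_ae (Filter.Eventually.of_forall key), MeasureTheory.integral_const_mul,
      MeasureTheory.Measure.integral_comp_mul_left G u]
    rw [abs_inv, smul_eq_mul]
    have h3 : |u| ^ (1 + 2 * α) = |u| * |u| ^ (2 * α) := by
      rw [Real.rpow_add hu', Real.rpow_one]
    rw [h3]
    field_simp

lemma norm_exp_I_mul (x : ℝ) : ‖Complex.exp (Complex.I * (x : ℂ))‖ = 1 := by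
  rw [mul_comm, Complex.norm_exp_ofReal_mul_I]

lemma continuous_e_comp (u : ℝ) : Continuous fun ξ : ℝ => e (u * ξ) := by
  unfold e
  exact (Complex.continuous_exp.comp (by continuity)).sub continuous_const

end FbmCov

open FbmCov

/-- The harmonizable representation of fBm has the fBm covariance kernel:
for `α ∈ (0,1)` and `c_{2α} := ∫ |e^{iξ} − 1|² |ξ|^{−1−2α} dξ`, the integral
`∫ (e^{isξ} − 1) conj(e^{itξ} − 1) |ξ|^{−1−2α} dξ` is absolutely convergent, real,
and equals `c_{2α} · ½(|s|^{2α} + |t|^{2α} − |t−s|^{2α})`. -/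
theorem fbm_covariance (α : ℝ) (hα : α ∈ Set.Ioo (0:ℝ) 1) (s t : ℝ) :
    Integrable (fun ξ : ℝ => (Complex.exp (Complex.I * (s : ℂ) * (ξ : ℂ)) - 1) *
        (starRingEnd ℂ) (Complex.exp (Complex.I * (t : ℂ) * (ξ : ℂ)) - 1) *
        ((|ξ| ^ (-1 - 2 * α) : ℝ) : ℂ)) ∧
    ∫ ξ : ℝ, (Complex.exp (Complex.I * (s : ℂ) * (ξ : ℂ)) - 1) *
        (starRingEnd ℂ) (Complex.exp (Complex.I * (t : ℂ) * (ξ : ℂ)) - 1) *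
        ((|ξ| ^ (-1 - 2 * α) : ℝ) : ℂ)
      = (((∫ ξ : ℝ, ‖Complex.exp (Complex.I * (ξ : ℂ)) - 1‖ ^ 2 * |ξ| ^ (-1 - 2 * α)) *
          ((|s| ^ (2 * α) + |t| ^ (2 * α) - |t - s| ^ (2 * α)) / 2) : ℝ) : ℂ) := by
  set f : ℝ → ℂ := fun ξ =>
    e (s * ξ) * (starRingEnd ℂ) (e (t * ξ)) * ((|ξ| ^ (-1 - 2 * α) : ℝ) : ℂ) with hf
  have hfeq : (fun ξ : ℝ => (Complex.exp (Complex.I * (s : ℂ) * (ξ : ℂ)) - 1) *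
      (starRingEnd ℂ) (Complex.exp (Complex.I * (t : ℂ) * (ξ : ℂ)) - 1) *
      ((|ξ| ^ (-1 - 2 * α) : ℝ) : ℂ)) = f := by
    funext ξ
    simp only [hf, e]
    push_cast
    rw [mul_assoc Complex.I, mul_assoc Complex.I]
  -- integrability
  have hA := integrable_F hα s
  have hB := integrable_F hα t
  have hC := integrable_F hα (s - t)
  have hw : ∀ ξ : ℝ, (0:ℝ) ≤ |ξ| ^ (-1 - 2 * α) := fun ξ => Real.rpow_nonneg (abs_nonneg ξ) _
  have hmf : AEStronglyMeasurable f volume := by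
    refine Measurable.aestronglyMeasurable ?_
    have h1 : Continuous fun ξ : ℝ => e (s * ξ) * (starRingEnd ℂ) (e (t * ξ)) :=
      (continuous_e_comp s).mul (Complex.continuous_conj.comp (continuous_e_comp t))
    exact h1.measurable.mul (Complex.measurable_ofReal.comp (measurable_weight α))
  have hnormf : ∀ ξ : ℝ, ‖f ξ‖ = ‖e (s * ξ)‖ * ‖e (t * ξ)‖ * (|ξ| ^ (-1 - 2 * α)) := by
    intro ξ
    rw [hf]
    simp only [norm_mul, RCLike.norm_conj, Complex.norm_real, Real.norm_eq_abs,
      abs_of_nonneg (hw ξ)]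
  have hint : Integrable f := by
    refine ((hA.add hB).const_mul (1/2)).mono' hmf ?_
    filter_upwards with ξ
    rw [hnormf ξ]
    have h1 : ‖e (s * ξ)‖ * ‖e (t * ξ)‖ ≤ (1/2) * (‖e (s * ξ)‖ ^ 2 + ‖e (t * ξ)‖ ^ 2) := by
      nlinarith [sq_nonneg (‖e (s * ξ)‖ - ‖e (t * ξ)‖)]
    calc ‖e (s * ξ)‖ * ‖e (t * ξ)‖ * (|ξ| ^ (-1 - 2 * α))
        ≤ (1/2) * (‖e (s * ξ)‖ ^ 2 + ‖e (t * ξ)‖ ^ 2) * (|ξ| ^ (-1 - 2 * α)) :=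
          mul_le_mul_of_nonneg_right h1 (hw ξ)
    _ = 1/2 * (‖e (s * ξ)‖ ^ 2 * |ξ| ^ (-1 - 2 * α) + ‖e (t * ξ)‖ ^ 2 * |ξ| ^ (-1 - 2 * α)) := by
          ring
  -- symmetry
  have hconjf : ∀ ξ : ℝ, (starRingEnd ℂ) (f ξ) = f (-ξ) := by
    intro ξ
    simp [hf, map_mul, conj_e, Complex.conj_conj, Complex.conj_ofReal, mul_neg, neg_neg, abs_neg]
  have hneg : (∫ ξ : ℝ, f (-ξ)) = ∫ ξ : ℝ, f ξ := by
    calc ∫ ξ : ℝ, f (-ξ) = ∫ ξ : ℝ, f ((-1) * ξ) := by simp only [neg_one_mul]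
    _ = |(-1:ℝ)⁻¹| • ∫ ξ : ℝ, f ξ := MeasureTheory.Measure.integral_comp_mul_left f (-1)
    _ = ∫ ξ : ℝ, f ξ := by norm_num
  have hsym : ∫ ξ : ℝ, f ξ = (starRingEnd ℂ) (∫ ξ : ℝ, f ξ) := by
    rw [← integral_conj, integral_congr_ae (Filter.Eventually.of_forall hconjf), hneg]
  -- polarization
  have hpol : ∀ ξ : ℝ, f ξ + (starRingEnd ℂ) (f ξ) =
      ((‖e (s * ξ)‖ ^ 2 * |ξ| ^ (-1 - 2 * α) + ‖e (t * ξ)‖ ^ 2 * |ξ| ^ (-1 - 2 * α)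
        - ‖e ((s - t) * ξ)‖ ^ 2 * |ξ| ^ (-1 - 2 * α) : ℝ) : ℂ) := by
    intro ξ
    have hzw : ‖e (s * ξ) - e (t * ξ)‖ = ‖e ((s - t) * ξ)‖ := by
      have h3 : e (s * ξ) - e (t * ξ)
          = Complex.exp (Complex.I * ((t * ξ : ℝ) : ℂ)) * e ((s - t) * ξ) := by
        simp only [e]
        have harg : Complex.I * ((s * ξ : ℝ) : ℂ)
            = Complex.I * ((t * ξ : ℝ) : ℂ) + Complex.I * (((s - t) * ξ : ℝ) : ℂ) := by
          push_cast
          ring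
        rw [mul_sub, mul_one, ← Complex.exp_add, ← harg]
        ring
      rw [h3, norm_mul, norm_exp_I_mul, one_mul]
    have key : e (s * ξ) * (starRingEnd ℂ) (e (t * ξ))
        + (starRingEnd ℂ) (e (s * ξ)) * e (t * ξ)
        = ((‖e (s * ξ)‖ ^ 2 + ‖e (t * ξ)‖ ^ 2 - ‖e (s * ξ) - e (t * ξ)‖ ^ 2 : ℝ) : ℂ) := by
      have e1 : e (s * ξ) * (starRingEnd ℂ) (e (t * ξ))
          + (starRingEnd ℂ) (e (s * ξ)) * e (t * ξ)
          = e (s * ξ) * (starRingEnd ℂ) (e (s * ξ))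
            + e (t * ξ) * (starRingEnd ℂ) (e (t * ξ))
            - (e (s * ξ) - e (t * ξ)) * (starRingEnd ℂ) (e (s * ξ) - e (t * ξ)) := by
        rw [map_sub]
        ring
      rw [e1, Complex.mul_conj, Complex.mul_conj, Complex.mul_conj]
      simp only [Complex.normSq_eq_norm_sq]
      push_cast
      ring
    have hcf : (starRingEnd ℂ) (f ξ)
        = (starRingEnd ℂ) (e (s * ξ)) * e (t * ξ) * ((|ξ| ^ (-1 - 2 * α) : ℝ) : ℂ) := by
      simp [hf, map_mul, Complex.conj_conj, Complex.conj_ofReal]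
    rw [hf, hcf]
    have : e (s * ξ) * (starRingEnd ℂ) (e (t * ξ)) * ((|ξ| ^ (-1 - 2 * α) : ℝ) : ℂ)
        + (starRingEnd ℂ) (e (s * ξ)) * e (t * ξ) * ((|ξ| ^ (-1 - 2 * α) : ℝ) : ℂ)
        = (e (s * ξ) * (starRingEnd ℂ) (e (t * ξ))
          + (starRingEnd ℂ) (e (s * ξ)) * e (t * ξ)) * ((|ξ| ^ (-1 - 2 * α) : ℝ) : ℂ) := by
      ring
    rw [this, key, ← hzw]
    push_cast
    ring
  -- the real integral
  have hintconj : Integrable (fun ξ : ℝ => (starRingEnd ℂ) (f ξ)) :=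
    hint.comp_neg.congr (Filter.Eventually.of_forall fun ξ => (hconjf ξ).symm)
  set c : ℝ := ∫ ξ : ℝ, ‖e ξ‖ ^ 2 * |ξ| ^ (-1 - 2 * α) with hc
  have hreal : ∫ ξ : ℝ, (‖e (s * ξ)‖ ^ 2 * |ξ| ^ (-1 - 2 * α)
        + ‖e (t * ξ)‖ ^ 2 * |ξ| ^ (-1 - 2 * α)
        - ‖e ((s - t) * ξ)‖ ^ 2 * |ξ| ^ (-1 - 2 * α))
      = c * (|s| ^ (2 * α) + |t| ^ (2 * α) - |t - s| ^ (2 * α)) := by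
    have hAB : Integrable (fun ξ : ℝ => ‖e (s * ξ)‖ ^ 2 * |ξ| ^ (-1 - 2 * α)
        + ‖e (t * ξ)‖ ^ 2 * |ξ| ^ (-1 - 2 * α)) := hA.add hB
    rw [integral_sub hAB hC, integral_add hA hB, scaling hα s, scaling hα t,
      scaling hα (s - t), abs_sub_comm s t]
    ring
  have h2 : (∫ ξ : ℝ, f ξ) + (∫ ξ : ℝ, f ξ)
      = ((c * (|s| ^ (2 * α) + |t| ^ (2 * α) - |t - s| ^ (2 * α)) : ℝ) : ℂ) := by
    calc (∫ ξ : ℝ, f ξ) + (∫ ξ : ℝ, f ξ)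
        = (∫ ξ : ℝ, f ξ) + (starRingEnd ℂ) (∫ ξ : ℝ, f ξ) := by nth_rewrite 2 [hsym]; rfl
    _ = (∫ ξ : ℝ, f ξ) + ∫ ξ : ℝ, (starRingEnd ℂ) (f ξ) := by rw [integral_conj]
    _ = ∫ ξ : ℝ, (f ξ + (starRingEnd ℂ) (f ξ)) := (integral_add hint hintconj).symm
    _ = ∫ ξ : ℝ, ((‖e (s * ξ)‖ ^ 2 * |ξ| ^ (-1 - 2 * α) + ‖e (t * ξ)‖ ^ 2 * |ξ| ^ (-1 - 2 * α)
          - ‖e ((s - t) * ξ)‖ ^ 2 * |ξ| ^ (-1 - 2 * α) : ℝ) : ℂ) :=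
        integral_congr_ae (Filter.Eventually.of_forall hpol)
    _ = ((∫ ξ : ℝ, (‖e (s * ξ)‖ ^ 2 * |ξ| ^ (-1 - 2 * α) + ‖e (t * ξ)‖ ^ 2 * |ξ| ^ (-1 - 2 * α)
          - ‖e ((s - t) * ξ)‖ ^ 2 * |ξ| ^ (-1 - 2 * α)) : ℝ) : ℂ) :=
        integral_ofReal (f := fun ξ : ℝ => ‖e (s * ξ)‖ ^ 2 * |ξ| ^ (-1 - 2 * α)
          + ‖e (t * ξ)‖ ^ 2 * |ξ| ^ (-1 - 2 * α) - ‖e ((s - t) * ξ)‖ ^ 2 * |ξ| ^ (-1 - 2 * α))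
    _ = _ := by rw [hreal]
  constructor
  · rw [hfeq]; exact hint
  · rw [hfeq]
    have hcc : (∫ ξ : ℝ, ‖Complex.exp (Complex.I * (ξ : ℂ)) - 1‖ ^ 2 * |ξ| ^ (-1 - 2 * α)) = c := by
      rw [hc]; rfl
    rw [hcc]
    push_cast at h2 ⊢
    linear_combination h2 / 2
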